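/- Let d ∈ (0,1/2) and r < 0. Then lim_{t↓0} ∫_{−∞}^r ( (1/t)[(t−s)^d − (−s)^d] − d(−s)^{d−1} )² ds = 0, where the integral is a Lebesgue integral over (−∞, r]. -/

import Mathlib

open MeasureTheory Filter

/-- Mean value estimate: for `0 < d < 1`, `0 < u`, `0 < t`, the increment of `x ^ d`
over `[u, u + t]` lies in `[0, t * (d * u ^ (d-1))]`. -/
lemma stmt_14_key {d : ℝ} (hd0 : 0 < d) (hd1 : d < 1) {u t : ℝ} (hu : 0 < u) (ht : 0 < t) :
    0 ≤ (t + u) ^ d - u ^ d ∧ (t + u) ^ d - u ^ d ≤ t * (d * u ^ (d - 1)) := by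
  constructor
  · have := Real.rpow_le_rpow hu.le (by linarith : u ≤ t + u) hd0.le
    linarith
  · have hab : u < t + u := by linarith
    obtain ⟨c, hc, hceq⟩ := exists_hasDerivAt_eq_slope (fun x => x ^ d)
      (fun x => d * x ^ (d - 1)) hab
      (fun x hx => (Real.continuousAt_rpow_const x d
        (Or.inl (hu.trans_le hx.1).ne')).continuousWithinAt)
      (fun x hx => Real.hasDerivAt_rpow_const (Or.inl (hu.trans hx.1).ne'))
    have hcu : u < c := hc.1
    have hcpos : 0 < c := lt_trans hu hcu
    have hle : c ^ (d - 1) ≤ u ^ (d - 1) :=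
      Real.rpow_le_rpow_of_nonpos hu hcu.le (by linarith)
    have hslope : d * c ^ (d - 1) = ((t + u) ^ d - u ^ d) / t := by
      simpa using hceq
    have : ((t + u) ^ d - u ^ d) / t ≤ d * u ^ (d - 1) := by
      rw [← hslope]
      exact mul_le_mul_of_nonneg_left hle hd0.le
    calc (t + u) ^ d - u ^ d = (((t + u) ^ d - u ^ d) / t) * t := by field_simp
    _ ≤ (d * u ^ (d - 1)) * t := mul_le_mul_of_nonneg_right this ht.le
    _ = t * (d * u ^ (d - 1)) := mul_comm _ _

/-- For `d ∈ (0,1/2)` and `r < 0`,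
`lim_{t↓0} ∫_{−∞}^r ( (1/t)[(t−s)^d − (−s)^d] − d(−s)^{d−1} )² ds = 0`. -/
theorem stmt_14 (d : ℝ) (hd : d ∈ Set.Ioo (0 : ℝ) (1 / 2)) (r : ℝ) (hr : r < 0) :
    Tendsto
      (fun t : ℝ => ∫ s in Set.Iic r,
        ((1 / t) * ((t - s) ^ d - (-s) ^ d) - d * (-s) ^ (d - 1)) ^ 2)
      (nhdsWithin 0 (Set.Ioi 0)) (nhds 0) := by
  obtain ⟨hd0, hd2⟩ := hd
  have hd1 : d < 1 := by linarith
  have H : Tendsto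
      (fun t : ℝ => ∫ s in Set.Iic r,
        ((1 / t) * ((t - s) ^ d - (-s) ^ d) - d * (-s) ^ (d - 1)) ^ 2)
      (nhdsWithin 0 (Set.Ioi 0)) (nhds (∫ _ in Set.Iic r, (0 : ℝ))) := by
    apply tendsto_integral_filter_of_dominated_convergence
      (bound := fun s => (d * (-s) ^ (d - 1)) ^ 2)
    · -- measurability
      refine Eventually.of_forall fun t => ?_
      apply Measurable.aestronglyMeasurable
      have h1 : Measurable fun s : ℝ => (t - s) ^ d :=
        (measurable_const.sub measurable_id).pow measurable_const
      have h2 : Measurable fun s : ℝ => (-s) ^ d := measurable_neg.pow measurable_const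
      have h3 : Measurable fun s : ℝ => (-s) ^ (d - 1) := measurable_neg.pow measurable_const
      exact (((h1.sub h2).const_mul _).sub (h3.const_mul _)).pow_const 2
    · -- bound
      filter_upwards [self_mem_nhdsWithin] with t ht
      rw [ae_restrict_iff' measurableSet_Iic]
      refine Eventually.of_forall fun s hs => ?_
      simp only [Set.mem_Iic] at hs
      simp only [Set.mem_Ioi] at ht
      have hu : 0 < -s := by linarith
      obtain ⟨hk0, hk1⟩ := stmt_14_key hd0 hd1 hu ht
      have hts : t - s = t + -s := by ring
      rw [Real.norm_eq_abs, abs_of_nonneg (sq_nonneg _)]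
      have hB : 0 ≤ d * (-s) ^ (d - 1) := by positivity
      apply sq_le_sq'
      · rw [hts]
        have : (1 / t) * ((t + -s) ^ d - (-s) ^ d) ≥ 0 := by positivity
        linarith
      · rw [hts]
        have : (1 / t) * ((t + -s) ^ d - (-s) ^ d) ≤ d * (-s) ^ (d - 1) := by
          rw [div_mul_eq_mul_div, one_mul, div_le_iff₀ ht]
          linarith [hk1, mul_comm t (d * (-s) ^ (d - 1))]
        linarith
    · -- integrability of bound
      have hp : (d - 1) * 2 < -1 := by linarith
      have hI : IntegrableOn (fun x : ℝ => x ^ ((d - 1) * 2)) (Set.Ioi (-r)) :=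
        integrableOn_Ioi_rpow_of_lt hp (by linarith)
      have hI2 : IntegrableOn (fun x : ℝ => (-x) ^ ((d - 1) * 2)) (Set.Iio r) := by
        have := (MeasurePreserving.integrableOn_comp_preimage
          (Measure.measurePreserving_neg (volume : Measure ℝ))
          (Homeomorph.neg ℝ).measurableEmbedding).2 hI
        have hpre : (Neg.neg ⁻¹' Set.Ioi (-r) : Set ℝ) = Set.Iio r := by
          ext x; simp
        rw [hpre] at this
        exact this
      have hI3 : IntegrableOn (fun x : ℝ => (-x) ^ ((d - 1) * 2)) (Set.Iic r) :=
        (integrableOn_Iic_iff_integrableOn_Iio enorm_ne_top).2 hI2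
      have hI4 : IntegrableOn (fun x : ℝ => d ^ 2 * (-x) ^ ((d - 1) * 2)) (Set.Iic r) :=
        hI3.const_mul _
      refine hI4.congr_fun (fun s hs => ?_) measurableSet_Iic
      simp only [Set.mem_Iic] at hs
      have hu : (0 : ℝ) ≤ -s := by linarith
      rw [mul_pow]
      congr 1
      rw [← Real.rpow_natCast ((-s) ^ (d - 1)) 2, ← Real.rpow_mul hu]
      norm_num
    · -- pointwise limit
      rw [ae_restrict_iff' measurableSet_Iic]
      refine Eventually.of_forall fun s hs => ?_
      simp only [Set.mem_Iic] at hs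
      have hu : 0 < -s := by linarith
      have hds : HasDerivAt (fun x : ℝ => x ^ d) (d * (-s) ^ (d - 1)) (-s) :=
        Real.hasDerivAt_rpow_const (Or.inl hu.ne')
      have hslope := hasDerivAt_iff_tendsto_slope.1 hds
      have hmap : Tendsto (fun t : ℝ => t + -s) (nhdsWithin 0 (Set.Ioi 0))
          (nhdsWithin (-s) {(-s)}ᶜ) := by
        rw [tendsto_nhdsWithin_iff]
        constructor
        · have : Tendsto (fun t : ℝ => t + -s) (nhds 0) (nhds (0 + -s)) :=
            (continuous_id.add continuous_const).tendsto 0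
          simpa using this.mono_left nhdsWithin_le_nhds
        · filter_upwards [self_mem_nhdsWithin] with t ht
          simp only [Set.mem_Ioi] at ht
          simp only [Set.mem_compl_iff, Set.mem_singleton_iff]
          intro h
          nlinarith [h]
      have hcomp := hslope.comp hmap
      have hconv : Tendsto (fun t : ℝ => (1 / t) * ((t - s) ^ d - (-s) ^ d))
          (nhdsWithin 0 (Set.Ioi 0)) (nhds (d * (-s) ^ (d - 1))) := by
        refine hcomp.congr fun t => ?_
        simp only [Function.comp_apply, slope_def_field]
        have : t + -s - -s = t := by ring
        rw [this]
        have : t - s = t + -s := by ring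
        rw [this]
        field_simp
      have := (hconv.sub (tendsto_const_nhds
        (x := d * (-s) ^ (d - 1)) (f := nhdsWithin (0:ℝ) (Set.Ioi 0)))).pow 2
      simpa using this
  simpa using H
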